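/- Let U, V ∈ ℝ^{n×r} have orthonormal columns and satisfy the incoherence conditions max_i ‖U*e_i‖² ≤ μr/n and max_i ‖V*e_i‖² ≤ μr/n. Then for every pair (i,j), the matrix e_i e_j* satisfies ‖P_T(e_i e_j*)‖_F² ≤ 2μr/n, where P_T(M) = UU*M + MVV* − UU*MVV*. -/

import Mathlib

open Matrix

noncomputable def frobNorm {n : ℕ} (A : Matrix (Fin n) (Fin n) ℝ) : ℝ :=
  Real.sqrt (∑ i, ∑ j, (A i j) ^ 2)

def projT {n r : ℕ} (U V : Matrix (Fin n) (Fin r) ℝ)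
    (M : Matrix (Fin n) (Fin n) ℝ) : Matrix (Fin n) (Fin n) ℝ :=
  U * Uᵀ * M + M * (V * Vᵀ) - U * Uᵀ * M * (V * Vᵀ)

theorem projT_entry {n r : ℕ} (U V : Matrix (Fin n) (Fin r) ℝ) (i j a b : Fin n) :
    projT U V (Matrix.single i j 1) a b =
      ((if a = i then (1:ℝ) else 0) - (U * Uᵀ) a i) * (V * Vᵀ) j b
        + (U * Uᵀ) a i * (if b = j then 1 else 0) := by
  have h1 : ∀ c : Fin n, (U * Uᵀ * Matrix.single i j (1:ℝ)) a c
      = (U * Uᵀ) a i * (if c = j then 1 else 0) := by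
    intro c
    rw [Matrix.mul_apply]
    simp [Matrix.single, mul_ite, ite_and, eq_comm, Finset.sum_ite_eq]
  have h2 : (Matrix.single i j (1:ℝ) * (V * Vᵀ)) a b
      = (if a = i then (1:ℝ) else 0) * (V * Vᵀ) j b := by
    rw [Matrix.mul_apply]
    simp [Matrix.single, ite_mul, ite_and, eq_comm, Finset.sum_ite_eq]
  have h3 : (U * Uᵀ * Matrix.single i j (1:ℝ) * (V * Vᵀ)) a b
      = (U * Uᵀ) a i * (V * Vᵀ) j b := by
    rw [Matrix.mul_apply]
    simp only [h1]
    simp [ite_mul, Finset.sum_ite_eq, mul_assoc]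
  simp only [projT, Matrix.add_apply, Matrix.sub_apply, h1, h2, h3]
  ring

theorem proj_col_sq_sum {n r : ℕ} (U : Matrix (Fin n) (Fin r) ℝ)
    (hU : Uᵀ * U = 1) (i : Fin n) :
    ∑ a, ((U * Uᵀ) a i)^2 = (U * Uᵀ) i i := by
  have hPP : (U * Uᵀ) * (U * Uᵀ) = U * Uᵀ := by
    rw [Matrix.mul_assoc, ← Matrix.mul_assoc Uᵀ U Uᵀ, hU, Matrix.one_mul]
  have hsym : ∀ a c : Fin n, (U * Uᵀ) a c = (U * Uᵀ) c a := by
    intro a c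
    have := congrFun (congrFun (Matrix.transpose_mul U Uᵀ) a) c
    simpa [Matrix.mul_apply, mul_comm] using this
  calc ∑ a, ((U * Uᵀ) a i)^2 = ∑ a, (U * Uᵀ) i a * (U * Uᵀ) a i := by
        refine Finset.sum_congr rfl fun a _ => ?_
        rw [sq, hsym a i]
    _ = ((U * Uᵀ) * (U * Uᵀ)) i i := (Matrix.mul_apply).symm
    _ = (U * Uᵀ) i i := by rw [hPP]

/-- incoherence implies `‖P_T(e_i e_jᵀ)‖_F² ≤ 2μr/n`. -/
theorem projT_stdBasis_frobNorm_sq_le {n r : ℕ} (hn : 0 < n)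
    (U V : Matrix (Fin n) (Fin r) ℝ)
    (hU : Uᵀ * U = 1) (hV : Vᵀ * V = 1)
    (μ : ℝ) (hμ : 0 < μ) (hr : r ≤ n)
    (hUinc : ∀ i : Fin n, ∑ k, (U i k) ^ 2 ≤ μ * r / n)
    (hVinc : ∀ i : Fin n, ∑ k, (V i k) ^ 2 ≤ μ * r / n) :
    ∀ i j : Fin n,
      frobNorm (projT U V (Matrix.single i j 1)) ^ 2 ≤ 2 * μ * r / n := by
  intro i j
  set P : Matrix (Fin n) (Fin n) ℝ := U * Uᵀ with hPdef
  set Q : Matrix (Fin n) (Fin n) ℝ := V * Vᵀ with hQdef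
  -- diagonal entries
  have hαdiag : P i i = ∑ k, (U i k)^2 := by
    simp [hPdef, Matrix.mul_apply, sq]
  have hβdiag : Q j j = ∑ k, (V j k)^2 := by
    simp [hQdef, Matrix.mul_apply, sq]
  have hα0 : 0 ≤ P i i := by
    rw [hαdiag]; exact Finset.sum_nonneg fun k _ => sq_nonneg _
  have hβ0 : 0 ≤ Q j j := by
    rw [hβdiag]; exact Finset.sum_nonneg fun k _ => sq_nonneg _
  have hαle : P i i ≤ μ * r / n := by rw [hαdiag]; exact hUinc i
  have hβle : Q j j ≤ μ * r / n := by rw [hβdiag]; exact hVinc j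
  have hu : ∑ a, (P a i)^2 = P i i := proj_col_sq_sum U hU i
  -- row version for Q
  have hQsym : ∀ a c : Fin n, Q a c = Q c a := by
    intro a c
    have := congrFun (congrFun (Matrix.transpose_mul V Vᵀ) a) c
    simpa [hQdef, Matrix.mul_apply, mul_comm] using this
  have hv : ∑ b, (Q j b)^2 = Q j j := by
    calc ∑ b, (Q j b)^2 = ∑ b, (Q b j)^2 := by
          refine Finset.sum_congr rfl fun b _ => ?_; rw [hQsym j b]
      _ = Q j j := proj_col_sq_sum V hV j
  -- squared Frobenius norm of the projection
  have hsum : ∑ a, ∑ b, (projT U V (Matrix.single i j 1) a b)^2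
      = P i i + Q j j - P i i * Q j j := by
    have hentry := projT_entry U V i j
    have hinner : ∀ a : Fin n,
        ∑ b, (projT U V (Matrix.single i j 1) a b)^2
          = ((if a = i then (1:ℝ) else 0) - P a i)^2 * Q j j
            + 2 * ((if a = i then (1:ℝ) else 0) - P a i) * P a i * Q j j
            + (P a i)^2 := by
      intro a
      set c : ℝ := (if a = i then (1:ℝ) else 0) - P a i with hc
      calc ∑ b, (projT U V (Matrix.single i j 1) a b)^2
          = ∑ b, (c^2 * (Q j b)^2 + (2 * c * P a i) * ((if b = j then (1:ℝ) else 0) * Q j b)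
              + (P a i)^2 * (if b = j then (1:ℝ) else 0)) := by
            refine Finset.sum_congr rfl fun b _ => ?_
            rw [hentry a b]
            by_cases hb : b = j <;> simp [hb] <;> ring
        _ = c^2 * (∑ b, (Q j b)^2) + (2 * c * P a i) * (∑ b, (if b = j then (1:ℝ) else 0) * Q j b)
              + (∑ b, (P a i)^2 * (if b = j then (1:ℝ) else 0)) := by
            rw [Finset.sum_add_distrib, Finset.sum_add_distrib, Finset.mul_sum, Finset.mul_sum]
        _ = c^2 * Q j j + 2 * c * P a i * Q j j + (P a i)^2 := by
            rw [hv]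
            simp [ite_mul, mul_ite, Finset.sum_ite_eq]
    calc ∑ a, ∑ b, (projT U V (Matrix.single i j 1) a b)^2
        = ∑ a, (((if a = i then (1:ℝ) else 0) - P a i)^2 * Q j j
            + 2 * ((if a = i then (1:ℝ) else 0) - P a i) * P a i * Q j j
            + (P a i)^2) := Finset.sum_congr rfl fun a _ => hinner a
      _ = ∑ a, (((if a = i then (1:ℝ) else 0) - (P a i)^2) * Q j j + (P a i)^2) := by
            refine Finset.sum_congr rfl fun a _ => ?_
            by_cases ha : a = i <;> simp [ha] <;> ring
      _ = (∑ a, ((if a = i then (1:ℝ) else 0) - (P a i)^2)) * Q j j + ∑ a, (P a i)^2 := by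
            rw [Finset.sum_add_distrib, Finset.sum_mul]
      _ = (1 - P i i) * Q j j + P i i := by
            rw [Finset.sum_sub_distrib, hu]
            simp [Finset.sum_ite_eq]
      _ = P i i + Q j j - P i i * Q j j := by ring
  have hnn : 0 ≤ ∑ a, ∑ b, (projT U V (Matrix.single i j 1) a b)^2 :=
    Finset.sum_nonneg fun a _ => Finset.sum_nonneg fun b _ => sq_nonneg _
  have hfs : frobNorm (projT U V (Matrix.single i j 1)) ^ 2
      = P i i + Q j j - P i i * Q j j := by
    rw [frobNorm, Real.sq_sqrt hnn, hsum]
  rw [hfs]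
  have hprod : 0 ≤ P i i * Q j j := mul_nonneg hα0 hβ0
  have : (2:ℝ) * μ * r / n = μ * r / n + μ * r / n := by ring
  rw [this]
  linarith
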